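/- arXiv:0706.2634 — 5 statements merged into one kernel-verified Lean document; each statement's English description precedes it below -/
import Mathlib

section
/- Let N ≥ 1 and let P, Q be N×N complex matrices with det P = 0 and det Q = 0. Suppose that QP is regular semisimple (its characteristic polynomial has N distinct roots) and det(QP) = 0. Then ℂ^N is the internal direct sum of the range of Q and the kernel of P; that is, range(Q) ∩ ker(P) = {0} and range(Q) + ker(P) = ℂ^N. -/
open Polynomial Module Submodule

/-- If `P`, `Q` are singular `N×N` complex matrices such that `QP` is
regular semisimple (squarefree characteristic polynomial) and singular, then
`ℂ^N = range Q ⊕ ker P` internally: the intersection is trivial and the sum is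
everything. -/
theorem range_ker_compl_of_regular_semisimple (N : ℕ) (hN : 1 ≤ N)
    (P Q : Matrix (Fin N) (Fin N) ℂ)
    (hP : P.det = 0) (hQ : Q.det = 0)
    (hss : Squarefree (Q * P).charpoly) (hQPdet : (Q * P).det = 0) :
    LinearMap.range Q.mulVecLin ⊓ LinearMap.ker P.mulVecLin = ⊥ ∧
      LinearMap.range Q.mulVecLin ⊔ LinearMap.ker P.mulVecLin = ⊤ := by
  classical
  set χ : ℂ[X] := (Q * P).charpoly with hχdef
  have hχ0 : χ ≠ 0 := (Matrix.charpoly_monic _).ne_zero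
  -- constant coefficient vanishes
  have hcoeff0 : χ.coeff 0 = 0 := by
    have h := Matrix.det_eq_sign_charpoly_coeff (Q * P)
    rw [hQPdet] at h
    have hne : ((-1 : ℂ)) ^ Fintype.card (Fin N) ≠ 0 := pow_ne_zero _ (by norm_num)
    rcases mul_eq_zero.mp h.symm with h' | h'
    · exact absurd h' hne
    · exact h'
  -- coefficient 1 does not vanish (squarefreeness)
  have hcoeff1 : χ.coeff 1 ≠ 0 := by
    intro hc1
    have hdvd : X ^ 2 ∣ χ := by
      rw [Polynomial.X_pow_dvd_iff]
      intro d hd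
      interval_cases d
      · exact hcoeff0
      · exact hc1
    have : IsUnit (X : ℂ[X]) := hss X (by simpa [sq] using hdvd)
    exact Polynomial.not_isUnit_X this
  have hnat : χ.natTrailingDegree = 1 := by
    have h1 : χ.natTrailingDegree ≤ 1 := Polynomial.natTrailingDegree_le_of_ne_zero hcoeff1
    have h0 : χ.natTrailingDegree ≠ 0 := by
      intro h
      exact Polynomial.coeff_natTrailingDegree_ne_zero.mpr hχ0 (by rw [h]; exact hcoeff0)
    omega
  set f := P.mulVecLin with hfdef
  set g := Q.mulVecLin with hgdef
  set E := (Q * P).mulVecLin with hEdef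
  have hE : E = g ∘ₗ f := Matrix.mulVecLin_mul Q P
  -- charpoly of the linear map
  have hcharpoly : LinearMap.charpoly E = χ := by
    have hm : LinearMap.toMatrix (Pi.basisFun ℂ (Fin N)) (Pi.basisFun ℂ (Fin N)) E = Q * P := by
      rw [LinearMap.toMatrix_eq_toMatrix', hEdef, ← Matrix.toLin'_apply', LinearMap.toMatrix'_toLin']
    rw [← LinearMap.charpoly_toMatrix E (Pi.basisFun ℂ (Fin N)), hm]
  have hCH : aeval E χ = 0 := by
    rw [← hcharpoly]; exact LinearMap.aeval_self_charpoly E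
  -- factor χ = divX χ * X
  have hfact : χ.divX * X = χ := by
    have := χ.divX_mul_X_add
    rwa [hcoeff0, map_zero, add_zero] at this
  have hr0 : χ.divX.coeff 0 = χ.coeff 1 := Polynomial.coeff_divX
  -- range ⊓ ker = ⊥
  have hdisj : LinearMap.range E ⊓ LinearMap.ker E = ⊥ := by
    rw [eq_bot_iff]
    rintro v ⟨⟨w, rfl⟩, hvk⟩
    have hvk' : E (E w) = 0 := LinearMap.mem_ker.mp hvk
    have h1 : (aeval E χ.divX) (E w) = χ.divX.coeff 0 • (E w) := by
      conv_lhs => rw [← χ.divX.divX_mul_X_add]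
      rw [map_add, map_mul, aeval_X, aeval_C]
      simp [Module.End.mul_apply, hvk', Module.algebraMap_end_apply]
    have h2 : (aeval E χ.divX) (E w) = 0 := by
      have hmul : aeval E χ.divX * E = 0 := by
        have := hCH
        rw [← hfact, map_mul, aeval_X] at this
        exact this
      calc (aeval E χ.divX) (E w) = (aeval E χ.divX * E) w := rfl
        _ = 0 := by rw [hmul]; rfl
    have : χ.divX.coeff 0 • (E w) = 0 := by rw [← h1, h2]
    rcases smul_eq_zero.mp this with h | h
    · exact absurd h (hr0 ▸ hcoeff1)
    · simpa using h
  -- dim ker E ≤ 1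
  have hkerE_le : finrank ℂ (LinearMap.ker E) ≤ 1 := by
    have hle : LinearMap.ker E ≤ Module.End.maxGenEigenspace E 0 := by
      intro x hx
      rw [Module.End.mem_maxGenEigenspace]
      exact ⟨1, by simpa using LinearMap.mem_ker.mp hx⟩
    calc finrank ℂ (LinearMap.ker E) ≤ finrank ℂ (Module.End.maxGenEigenspace E 0) :=
          Submodule.finrank_mono hle
      _ = (LinearMap.charpoly E).natTrailingDegree := LinearMap.finrank_maxGenEigenspace_zero_eq E
      _ = 1 := by rw [hcharpoly, hnat]
  -- ker f nontrivial
  have hkerf_pos : 1 ≤ finrank ℂ (LinearMap.ker f) := by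
    obtain ⟨v, hv0, hveq⟩ := (Matrix.exists_mulVec_eq_zero_iff).mpr hP
    have hvmem : v ∈ LinearMap.ker f := by
      rw [LinearMap.mem_ker, hfdef, Matrix.mulVecLin_apply, hveq]
    exact Module.finrank_pos_iff_exists_ne_zero.mpr
      ⟨⟨v, hvmem⟩, by simp [Submodule.mk_eq_zero, hv0]⟩
  have hkerg_pos : 1 ≤ finrank ℂ (LinearMap.ker g) := by
    obtain ⟨v, hv0, hveq⟩ := (Matrix.exists_mulVec_eq_zero_iff).mpr hQ
    have hvmem : v ∈ LinearMap.ker g := by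
      rw [LinearMap.mem_ker, hgdef, Matrix.mulVecLin_apply, hveq]
    exact Module.finrank_pos_iff_exists_ne_zero.mpr
      ⟨⟨v, hvmem⟩, by simp [Submodule.mk_eq_zero, hv0]⟩
  -- ker f = ker E
  have hker_le : LinearMap.ker f ≤ LinearMap.ker E := by
    intro x hx
    rw [LinearMap.mem_ker, hE, LinearMap.comp_apply, LinearMap.mem_ker.mp hx, map_zero]
  have hkerf_eq : LinearMap.ker f = LinearMap.ker E :=
    Submodule.eq_of_le_of_finrank_le hker_le (hkerE_le.trans hkerf_pos)
  have hkerE1 : finrank ℂ (LinearMap.ker E) = 1 :=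
    le_antisymm hkerE_le (hkerf_eq ▸ hkerf_pos)
  -- range E = range g
  have hrnE := LinearMap.finrank_range_add_finrank_ker E
  have hrng := LinearMap.finrank_range_add_finrank_ker g
  have hdim : finrank ℂ (Fin N → ℂ) = N := by simp
  have hrange_le : LinearMap.range E ≤ LinearMap.range g := by
    rw [hE]
    exact LinearMap.range_comp_le_range f g
  have hrange_eq : LinearMap.range E = LinearMap.range g := by
    apply Submodule.eq_of_le_of_finrank_le hrange_le
    rw [hdim] at hrnE hrng
    omega
  constructor
  · rw [hkerf_eq, ← hrange_eq]
    exact hdisj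
  · rw [hkerf_eq, ← hrange_eq]
    apply Submodule.eq_top_of_finrank_eq
    have hsup := Submodule.finrank_sup_add_finrank_inf_eq (LinearMap.range E) (LinearMap.ker E)
    rw [hdisj] at hsup
    simp only [finrank_bot, add_zero] at hsup
    rw [hsup, hrnE, hdim]
end

section
/- Let N ≥ 1 and let B be an N×N complex matrix that is regular semisimple (its characteristic polynomial has N distinct roots) with det B = 0. Suppose P, Q, P', Q' are N×N complex matrices with PQ = B, P'Q' = B, and det P = det Q = det P' = det Q' = 0. Then there exists an invertible N×N complex matrix g such that P' = P g^{-1} and Q' = g Q. -/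
open Matrix LinearMap Module Polynomial Submodule

set_option synthInstance.maxHeartbeats 400000 in
set_option maxHeartbeats 1000000 in
/-- Over a singular regular semisimple matrix `B`, any two factorizations
`B = PQ = P'Q'` with all four factors singular are related by the `GL_N(ℂ)` action
`g · (P, Q) = (P g⁻¹, g Q)`: the singular locus of the fibre is a single orbit. -/
theorem closed_orbit_unique (N : ℕ) (hN : 1 ≤ N)
    (B P Q P' Q' : Matrix (Fin N) (Fin N) ℂ)
    (hss : Squarefree B.charpoly) (hBdet : B.det = 0)
    (hPQ : P * Q = B) (hPQ' : P' * Q' = B)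
    (hP : P.det = 0) (hQ : Q.det = 0) (hP' : P'.det = 0) (hQ' : Q'.det = 0) :
    ∃ g : (Matrix (Fin N) (Fin N) ℂ)ˣ,
      P' = P * (↑g⁻¹ : Matrix (Fin N) (Fin N) ℂ) ∧
      Q' = (↑g : Matrix (Fin N) (Fin N) ℂ) * Q := by
  classical
  set V := (Fin N → ℂ) with hV
  set fB := Matrix.toLin' B with hfB
  set fP := Matrix.toLin' P with hfP
  set fQ := Matrix.toLin' Q with hfQ
  set fP' := Matrix.toLin' P' with hfP'
  set fQ' := Matrix.toLin' Q' with hfQ'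
  have hcomp : fP.comp fQ = fB := by rw [hfP, hfQ, hfB, ← Matrix.toLin'_mul, hPQ]
  have hcomp' : fP'.comp fQ' = fB := by rw [hfP', hfQ', hfB, ← Matrix.toLin'_mul, hPQ']
  have hdim : finrank ℂ V = N := by
    show finrank ℂ (Fin N → ℂ) = N
    simp
  -- charpoly transfer
  have hchar : fB.charpoly = B.charpoly := by
    rw [← LinearMap.charpoly_toMatrix fB (Pi.basisFun ℂ (Fin N)),
      LinearMap.toMatrix_eq_toMatrix', hfB, LinearMap.toMatrix'_toLin']
  -- dim ker B ≤ 1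
  have hkerB : finrank ℂ (LinearMap.ker fB) ≤ 1 := by
    have h1 : LinearMap.ker fB ≤ Module.End.maxGenEigenspace fB 0 := by
      intro x hx
      rw [Module.End.mem_maxGenEigenspace]
      exact ⟨1, by simpa using hx⟩
    have h2 := LinearMap.finrank_maxGenEigenspace_zero_eq fB
    have h3 : natTrailingDegree fB.charpoly ≤ 1 := by
      rw [hchar, ← Polynomial.rootMultiplicity_eq_natTrailingDegree']
      have hp0 : B.charpoly ≠ 0 := (Matrix.charpoly_monic B).ne_zero
      rw [Polynomial.rootMultiplicity_le_iff hp0]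
      intro hdvd
      rw [map_zero, sub_zero] at hdvd
      rw [pow_succ, pow_one] at hdvd
      exact Polynomial.not_isUnit_X (hss X hdvd)
    calc finrank ℂ (LinearMap.ker fB) ≤ finrank ℂ (Module.End.maxGenEigenspace fB 0) :=
          Submodule.finrank_mono h1
      _ ≤ 1 := h2 ▸ h3
  -- kernels of right factors equal ker B
  have kerpos : ∀ q : Matrix (Fin N) (Fin N) ℂ, q.det = 0 →
      1 ≤ finrank ℂ (LinearMap.ker (Matrix.toLin' q)) := by
    intro q hq
    have hlt : ⊥ < LinearMap.ker (Matrix.toLin' q) :=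
      LinearMap.bot_lt_ker_of_det_eq_zero (by rw [LinearMap.det_toLin', hq])
    have : Nontrivial (LinearMap.ker (Matrix.toLin' q)) :=
      Submodule.nontrivial_iff_ne_bot.mpr hlt.ne'
    exact Module.finrank_pos_iff.mpr this
  have kerEq : ∀ p q : Matrix (Fin N) (Fin N) ℂ, p * q = B → q.det = 0 →
      LinearMap.ker (Matrix.toLin' q) = LinearMap.ker fB := by
    intro p q hpq hq
    have hle : LinearMap.ker (Matrix.toLin' q) ≤ LinearMap.ker fB := by
      intro x hx
      rw [LinearMap.mem_ker] at hx ⊢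
      rw [hfB, ← hpq, Matrix.toLin'_mul, LinearMap.comp_apply, hx, map_zero]
    exact Submodule.eq_of_le_of_finrank_le hle (le_trans hkerB (kerpos q hq))
  have hkQ : LinearMap.ker fQ = LinearMap.ker fB := kerEq P Q hPQ hQ
  have hkQ' : LinearMap.ker fQ' = LinearMap.ker fB := kerEq P' Q' hPQ' hQ'
  have hkB1 : finrank ℂ (LinearMap.ker fB) = 1 :=
    le_antisymm hkerB (hkQ ▸ kerpos Q hQ)
  -- complementarity
  have compl : ∀ p q : Matrix (Fin N) (Fin N) ℂ, p * q = B → p.det = 0 → q.det = 0 →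
      IsCompl (LinearMap.range (Matrix.toLin' q)) (LinearMap.ker (Matrix.toLin' p)) ∧
      finrank ℂ (LinearMap.ker (Matrix.toLin' p)) = 1 := by
    intro p q hpq hp hq
    have hkq := kerEq p q hpq hq
    have hdisj : Disjoint (LinearMap.range (Matrix.toLin' q))
        (LinearMap.ker (Matrix.toLin' p)) := by
      rw [disjoint_def]
      intro v hv1 hv2
      obtain ⟨x, rfl⟩ := hv1
      have hx : x ∈ LinearMap.ker fB := by
        rw [LinearMap.mem_ker] at hv2 ⊢
        rw [hfB, ← hpq, Matrix.toLin'_mul, LinearMap.comp_apply, hv2]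
      rw [← hkq, LinearMap.mem_ker] at hx
      exact hx
    have hrk : finrank ℂ (LinearMap.range (Matrix.toLin' q)) = N - 1 := by
      have h := LinearMap.finrank_range_add_finrank_ker (Matrix.toLin' q)
      rw [hkq, hkB1] at h
      rw [hdim] at h
      omega
    have hkp1 := kerpos p hp
    have hadd := Submodule.finrank_sup_add_finrank_inf_eq
      (LinearMap.range (Matrix.toLin' q)) (LinearMap.ker (Matrix.toLin' p))
    rw [hdisj.eq_bot, finrank_bot, add_zero] at hadd
    have hle := Submodule.finrank_le
      (LinearMap.range (Matrix.toLin' q) ⊔ LinearMap.ker (Matrix.toLin' p))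
    rw [hdim] at hle
    have hsup : LinearMap.range (Matrix.toLin' q) ⊔ LinearMap.ker (Matrix.toLin' p) = ⊤ := by
      apply Submodule.eq_top_of_finrank_eq
      rw [hdim]
      omega
    exact ⟨⟨hdisj, codisjoint_iff.mpr hsup⟩, by omega⟩
  obtain ⟨hC, hCk⟩ := compl P Q hPQ hP hQ
  obtain ⟨hC', hCk'⟩ := compl P' Q' hPQ' hP' hQ'
  rw [← hfP, ← hfQ] at hC
  rw [← hfP] at hCk
  rw [← hfP', ← hfQ'] at hC'
  rw [← hfP'] at hCk'
  -- construct g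
  let e1 : LinearMap.range fQ ≃ₗ[ℂ] LinearMap.range fQ' :=
    (fQ.quotKerEquivRange.symm.trans
      (Submodule.quotEquivOfEq _ _ (hkQ.trans hkQ'.symm))).trans fQ'.quotKerEquivRange
  have he1 : ∀ x : V, (e1 ⟨fQ x, LinearMap.mem_range_self _ x⟩ : V) = fQ' x := by
    intro x
    simp only [e1, LinearEquiv.trans_apply, LinearMap.quotKerEquivRange_symm_apply_image]
    rw [Submodule.mkQ_apply, Submodule.quotEquivOfEq_mk, LinearMap.quotKerEquivRange_apply_mk]
  let e2 : LinearMap.ker fP ≃ₗ[ℂ] LinearMap.ker fP' :=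
    LinearEquiv.ofFinrankEq _ _ (by rw [hCk, hCk'])
  let gE : V ≃ₗ[ℂ] V :=
    ((Submodule.prodEquivOfIsCompl _ _ hC).symm.trans (e1.prodCongr e2)).trans
      (Submodule.prodEquivOfIsCompl _ _ hC')
  have hgQ : ∀ x : V, gE (fQ x) = fQ' x := by
    intro x
    have h1 : (Submodule.prodEquivOfIsCompl _ _ hC).symm (fQ x) =
        ((⟨fQ x, LinearMap.mem_range_self _ x⟩ : LinearMap.range fQ), 0) :=
      Submodule.prodEquivOfIsCompl_symm_apply_left _ _ hC
        (⟨fQ x, LinearMap.mem_range_self _ x⟩ : LinearMap.range fQ)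
    simp only [gE, LinearEquiv.trans_apply, h1, LinearEquiv.prodCongr_apply, map_zero,
      Submodule.coe_prodEquivOfIsCompl', Submodule.coe_zero, add_zero]
    exact he1 x
  have hgK : ∀ v ∈ LinearMap.ker fP, fP' (gE v) = 0 := by
    intro v hv
    have h1 : (Submodule.prodEquivOfIsCompl _ _ hC).symm v = (0, (⟨v, hv⟩ : LinearMap.ker fP)) :=
      Submodule.prodEquivOfIsCompl_symm_apply_right _ _ hC (⟨v, hv⟩ : LinearMap.ker fP)
    have h2 : gE v = ((e2 ⟨v, hv⟩ : LinearMap.ker fP') : V) := by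
      simp only [gE, LinearEquiv.trans_apply, h1, LinearEquiv.prodCongr_apply, map_zero,
        Submodule.coe_prodEquivOfIsCompl', Submodule.coe_zero, zero_add]
    rw [h2]
    exact (e2 ⟨v, hv⟩).2
  have hgP : ∀ v : V, fP' (gE v) = fP v := by
    intro v
    have hv : v ∈ LinearMap.range fQ ⊔ LinearMap.ker fP := by
      rw [hC.sup_eq_top]; trivial
    obtain ⟨a, ha, b, hb, rfl⟩ := Submodule.mem_sup.mp hv
    obtain ⟨x, rfl⟩ := ha
    rw [map_add, map_add, map_add, hgQ x, hgK b hb, add_zero]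
    have h1 : fP' (fQ' x) = fP (fQ x) := by
      have := congrArg (fun f : V →ₗ[ℂ] V => f x) (hcomp'.trans hcomp.symm)
      simpa using this
    rw [h1, hb, add_zero]
  -- back to matrices
  have hunit : LinearMap.toMatrix' (gE : V →ₗ[ℂ] V) *
      LinearMap.toMatrix' (gE.symm : V →ₗ[ℂ] V) = 1 := by
    rw [← LinearMap.toMatrix'_comp, ← LinearMap.toMatrix'_id (R := ℂ) (n := Fin N)]
    congr 1
    ext v
    simp
  have hunit' : LinearMap.toMatrix' (gE.symm : V →ₗ[ℂ] V) *
      LinearMap.toMatrix' (gE : V →ₗ[ℂ] V) = 1 := by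
    rw [← LinearMap.toMatrix'_comp, ← LinearMap.toMatrix'_id (R := ℂ) (n := Fin N)]
    congr 1
    ext v
    simp
  refine ⟨⟨LinearMap.toMatrix' (gE : V →ₗ[ℂ] V),
    LinearMap.toMatrix' (gE.symm : V →ₗ[ℂ] V), hunit, hunit'⟩, ?_, ?_⟩
  · -- P' = P * g⁻¹
    have hPg : P' * LinearMap.toMatrix' (gE : V →ₗ[ℂ] V) = P := by
      have hPcomp : fP'.comp (gE : V →ₗ[ℂ] V) = fP := LinearMap.ext hgP
      calc P' * LinearMap.toMatrix' (gE : V →ₗ[ℂ] V)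
          = LinearMap.toMatrix' fP' * LinearMap.toMatrix' (gE : V →ₗ[ℂ] V) := by
            rw [hfP', LinearMap.toMatrix'_toLin']
        _ = LinearMap.toMatrix' (fP'.comp (gE : V →ₗ[ℂ] V)) := (LinearMap.toMatrix'_comp _ _).symm
        _ = LinearMap.toMatrix' fP := by rw [hPcomp]
        _ = P := by rw [hfP, LinearMap.toMatrix'_toLin']
    show P' = P * LinearMap.toMatrix' (gE.symm : V →ₗ[ℂ] V)
    rw [← hPg, mul_assoc, hunit, mul_one]
  · -- Q' = g * Q
    have hQcomp : (gE : V →ₗ[ℂ] V).comp fQ = fQ' := LinearMap.ext hgQ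
    show Q' = LinearMap.toMatrix' (gE : V →ₗ[ℂ] V) * Q
    calc Q' = LinearMap.toMatrix' fQ' := by rw [hfQ', LinearMap.toMatrix'_toLin']
      _ = LinearMap.toMatrix' ((gE : V →ₗ[ℂ] V).comp fQ) := by rw [hQcomp]
      _ = LinearMap.toMatrix' (gE : V →ₗ[ℂ] V) * LinearMap.toMatrix' fQ :=
          LinearMap.toMatrix'_comp _ _
      _ = LinearMap.toMatrix' (gE : V →ₗ[ℂ] V) * Q := by rw [hfQ, LinearMap.toMatrix'_toLin']
end

section
/- Let N ≥ 1 and let B be an N×N complex matrix that is regular semisimple (its characteristic polynomial has N distinct roots) with det B = 0. Let P, Q be N×N complex matrices with PQ = B. Then the closure (in the standard topology on pairs of N×N complex matrices) of the orbit { (P g^{-1}, g Q) : g ∈ GL_N(ℂ) } contains a pair (P', Q') with P'Q' = B, det P' = 0, and det Q' = 0. -/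
open Matrix Filter Topology

variable {N : ℕ}

private lemma mul_expand (E : Matrix (Fin N) (Fin N) ℂ) (hE : E * E = E) (a b : ℂ) :
    (1 + a • E) * (1 + b • E) = 1 + (a + b + a * b) • E := by
  simp only [mul_add, add_mul, one_mul, mul_one, smul_mul_assoc, mul_smul_comm, smul_smul, hE, smul_add, mul_comm b a,
    add_smul]
  abel

private lemma coeff_zero {t : ℂ} (ht : t ≠ 0) :
    (t - 1) + (t⁻¹ - 1) + (t - 1) * (t⁻¹ - 1) = 0 := by
  field_simp
  ring

/-- the unit with value `1 + (t-1)•E` and inverse `1 + (t⁻¹-1)•E`. -/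
private noncomputable def myUnit (E : Matrix (Fin N) (Fin N) ℂ) (hE : E * E = E) (t : ℂ)
    (ht : t ≠ 0) : (Matrix (Fin N) (Fin N) ℂ)ˣ where
  val := 1 + (t - 1) • E
  inv := 1 + (t⁻¹ - 1) • E
  val_inv := by rw [mul_expand E hE, coeff_zero ht, zero_smul, add_zero]
  inv_val := by
    rw [mul_expand E hE]
    have : (t⁻¹ - 1) + (t - 1) + (t⁻¹ - 1) * (t - 1) = 0 := by
      field_simp; ring
    rw [this, zero_smul, add_zero]

private lemma mem_closure_left (P Q E : Matrix (Fin N) (Fin N) ℂ)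
    (hEE : E * E = E) (hPE : P * E = 0) :
    ((P, (1 - E) * Q) : Matrix (Fin N) (Fin N) ℂ × Matrix (Fin N) (Fin N) ℂ) ∈
      closure {x : Matrix (Fin N) (Fin N) ℂ × Matrix (Fin N) (Fin N) ℂ |
          ∃ g : (Matrix (Fin N) (Fin N) ℂ)ˣ,
            x = (P * (↑g⁻¹ : Matrix (Fin N) (Fin N) ℂ),
                 (↑g : Matrix (Fin N) (Fin N) ℂ) * Q)} := by
  have hcont : Continuous fun t : ℂ => ((P, Q + (t - 1) • (E * Q)) :
      Matrix (Fin N) (Fin N) ℂ × Matrix (Fin N) (Fin N) ℂ) := by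
    fun_prop
  refine mem_closure_of_tendsto (f := fun t : ℂ => (P, Q + (t - 1) • (E * Q)))
    (b := 𝓝[≠] (0 : ℂ)) ?_ ?_
  · have h0 : ((P, (1 - E) * Q) : Matrix (Fin N) (Fin N) ℂ × Matrix (Fin N) (Fin N) ℂ)
        = (P, Q + ((0 : ℂ) - 1) • (E * Q)) := by
      simp [sub_mul, add_mul, one_mul, neg_mul, sub_eq_add_neg]
    rw [h0]
    exact (hcont.tendsto 0).mono_left nhdsWithin_le_nhds
  · filter_upwards [self_mem_nhdsWithin] with t ht
    have ht : t ≠ 0 := ht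
    refine ⟨myUnit E hEE t ht, ?_⟩
    have h1 : P * (↑(myUnit E hEE t ht)⁻¹ : Matrix (Fin N) (Fin N) ℂ) = P := by
      show P * (1 + (t⁻¹ - 1) • E) = P
      rw [mul_add, mul_one, mul_smul_comm, hPE, smul_zero, add_zero]
    have h2 : (↑(myUnit E hEE t ht) : Matrix (Fin N) (Fin N) ℂ) * Q
        = Q + (t - 1) • (E * Q) := by
      show (1 + (t - 1) • E) * Q = _
      rw [add_mul, one_mul, smul_mul_assoc]
    rw [h1, h2]

private lemma mem_closure_right (P Q E : Matrix (Fin N) (Fin N) ℂ)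
    (hEE : E * E = E) (hEQ : E * Q = 0) :
    ((P * (1 - E), Q) : Matrix (Fin N) (Fin N) ℂ × Matrix (Fin N) (Fin N) ℂ) ∈
      closure {x : Matrix (Fin N) (Fin N) ℂ × Matrix (Fin N) (Fin N) ℂ |
          ∃ g : (Matrix (Fin N) (Fin N) ℂ)ˣ,
            x = (P * (↑g⁻¹ : Matrix (Fin N) (Fin N) ℂ),
                 (↑g : Matrix (Fin N) (Fin N) ℂ) * Q)} := by
  have hcont : Continuous fun t : ℂ => ((P + (t - 1) • (P * E), Q) :
      Matrix (Fin N) (Fin N) ℂ × Matrix (Fin N) (Fin N) ℂ) := by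
    fun_prop
  refine mem_closure_of_tendsto (f := fun t : ℂ => (P + (t - 1) • (P * E), Q))
    (b := 𝓝[≠] (0 : ℂ)) ?_ ?_
  · have h0 : ((P * (1 - E), Q) : Matrix (Fin N) (Fin N) ℂ × Matrix (Fin N) (Fin N) ℂ)
        = (P + ((0 : ℂ) - 1) • (P * E), Q) := by
      simp [mul_sub, mul_add, mul_one, mul_neg, sub_eq_add_neg]
    rw [h0]
    exact (hcont.tendsto 0).mono_left nhdsWithin_le_nhds
  · filter_upwards [self_mem_nhdsWithin] with t ht
    have ht : t ≠ 0 := ht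
    refine ⟨(myUnit E hEE t ht)⁻¹, ?_⟩
    have h1 : P * (↑(myUnit E hEE t ht)⁻¹⁻¹ : Matrix (Fin N) (Fin N) ℂ)
        = P + (t - 1) • (P * E) := by
      rw [inv_inv]
      show P * (1 + (t - 1) • E) = _
      rw [mul_add, mul_one, mul_smul_comm]
    have h2 : (↑(myUnit E hEE t ht)⁻¹ : Matrix (Fin N) (Fin N) ℂ) * Q = Q := by
      show (1 + (t⁻¹ - 1) • E) * Q = Q
      rw [add_mul, one_mul, smul_mul_assoc, hEQ, smul_zero, add_zero]
    rw [h1, h2]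

/-- For a singular regular semisimple `B = PQ`, the closure of the
`GL_N(ℂ)`-orbit `{(P g⁻¹, g Q)}` (in the standard topology on pairs of matrices)
contains a pair `(P', Q')` with `P'Q' = B` and both factors singular. -/
theorem orbit_closure_contains_singular_pair (N : ℕ) (hN : 1 ≤ N)
    (B P Q : Matrix (Fin N) (Fin N) ℂ)
    (hss : Squarefree B.charpoly) (hBdet : B.det = 0)
    (hPQ : P * Q = B) :
    ∃ p : Matrix (Fin N) (Fin N) ℂ × Matrix (Fin N) (Fin N) ℂ,
      p ∈ closure {x : Matrix (Fin N) (Fin N) ℂ × Matrix (Fin N) (Fin N) ℂ |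
          ∃ g : (Matrix (Fin N) (Fin N) ℂ)ˣ,
            x = (P * (↑g⁻¹ : Matrix (Fin N) (Fin N) ℂ),
                 (↑g : Matrix (Fin N) (Fin N) ℂ) * Q)} ∧
      p.1 * p.2 = B ∧ p.1.det = 0 ∧ p.2.det = 0 := by
  have hdets : P.det * Q.det = 0 := by rw [← Matrix.det_mul, hPQ, hBdet]
  rcases mul_eq_zero.mp hdets with hP | hQ
  · -- det P = 0 : find v ≠ 0 with P *ᵥ v = 0
    obtain ⟨v, hv0, hPv⟩ := Matrix.exists_mulVec_eq_zero_iff.mpr hP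
    obtain ⟨i, hi⟩ := Function.ne_iff.mp hv0
    have hi : v i ≠ 0 := hi
    set w : Fin N → ℂ := fun c => if c = i then (v i)⁻¹ else 0 with hw
    have hsum : ∑ c, w c * v c = 1 := by
      rw [Finset.sum_eq_single i (fun b _ hb => by simp [hw, hb])
        (fun h => absurd (Finset.mem_univ i) h)]
      simp [hw, inv_mul_cancel₀ hi]
    set E : Matrix (Fin N) (Fin N) ℂ := Matrix.of fun a b => v a * w b with hE
    have hEE : E * E = E := by
      ext a b
      simp only [Matrix.mul_apply, hE, Matrix.of_apply]
      calc ∑ c, v a * w c * (v c * w b) = (v a * w b) * ∑ c, w c * v c := by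
            rw [Finset.mul_sum]; congr 1; ext c; ring
        _ = v a * w b := by rw [hsum, mul_one]
    have hPE : P * E = 0 := by
      ext a b
      simp only [Matrix.mul_apply, hE, Matrix.of_apply, Matrix.zero_apply]
      calc ∑ c, P a c * (v c * w b) = (∑ c, P a c * v c) * w b := by
            rw [Finset.sum_mul]; congr 1; ext c; ring
        _ = 0 := by
            have := congr_fun hPv a
            simp only [Matrix.mulVec, dotProduct, Pi.zero_apply] at this
            rw [this, zero_mul]
    have hdet1E : (1 - E : Matrix (Fin N) (Fin N) ℂ).det = 0 := by
      apply Matrix.exists_mulVec_eq_zero_iff.mp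
      refine ⟨v, hv0, ?_⟩
      ext a
      simp only [Matrix.sub_mulVec, Matrix.one_mulVec, Pi.sub_apply, Pi.zero_apply]
      have : E.mulVec v a = v a := by
        simp only [Matrix.mulVec, dotProduct, hE, Matrix.of_apply]
        calc ∑ c, v a * w c * v c = v a * ∑ c, w c * v c := by
              rw [Finset.mul_sum]; congr 1; ext c; ring
          _ = v a := by rw [hsum, mul_one]
      rw [this, sub_self]
    refine ⟨(P, (1 - E) * Q), mem_closure_left P Q E hEE hPE, ?_, hP, ?_⟩
    · show P * ((1 - E) * Q) = B
      rw [← mul_assoc, mul_sub, mul_one, hPE, sub_zero, hPQ]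
    · show ((1 - E) * Q).det = 0
      rw [Matrix.det_mul, hdet1E, zero_mul]
  · -- det Q = 0 : find v ≠ 0 with v ᵥ* Q = 0
    obtain ⟨v, hv0, hvQ⟩ := Matrix.exists_vecMul_eq_zero_iff.mpr hQ
    obtain ⟨i, hi⟩ := Function.ne_iff.mp hv0
    have hi : v i ≠ 0 := hi
    set w : Fin N → ℂ := fun c => if c = i then (v i)⁻¹ else 0 with hw
    have hsum : ∑ c, v c * w c = 1 := by
      rw [Finset.sum_eq_single i (fun b _ hb => by simp [hw, hb])
        (fun h => absurd (Finset.mem_univ i) h)]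
      simp [hw, mul_inv_cancel₀ hi]
    set E : Matrix (Fin N) (Fin N) ℂ := Matrix.of fun a b => w a * v b with hE
    have hEE : E * E = E := by
      ext a b
      simp only [Matrix.mul_apply, hE, Matrix.of_apply]
      calc ∑ c, w a * v c * (w c * v b) = (w a * v b) * ∑ c, v c * w c := by
            rw [Finset.mul_sum]; congr 1; ext c; ring
        _ = w a * v b := by rw [hsum, mul_one]
    have hEQ : E * Q = 0 := by
      ext a b
      simp only [Matrix.mul_apply, hE, Matrix.of_apply, Matrix.zero_apply]
      calc ∑ c, w a * v c * Q c b = w a * ∑ c, v c * Q c b := by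
            rw [Finset.mul_sum]; congr 1; ext c; ring
        _ = 0 := by
            have := congr_fun hvQ b
            simp only [Matrix.vecMul, dotProduct, Pi.zero_apply] at this
            rw [this, mul_zero]
    have hdet1E : (1 - E : Matrix (Fin N) (Fin N) ℂ).det = 0 := by
      apply Matrix.exists_mulVec_eq_zero_iff.mp
      refine ⟨w, ?_, ?_⟩
      · intro h
        have := congr_fun h i
        simp [hw, inv_eq_zero, hi] at this
      · ext a
        simp only [Matrix.sub_mulVec, Matrix.one_mulVec, Pi.sub_apply, Pi.zero_apply]
        have : E.mulVec w a = w a := by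
          simp only [Matrix.mulVec, dotProduct, hE, Matrix.of_apply]
          calc ∑ c, w a * v c * w c = w a * ∑ c, v c * w c := by
                rw [Finset.mul_sum]; congr 1; ext c; ring
            _ = w a := by rw [hsum, mul_one]
        rw [this, sub_self]
    refine ⟨(P * (1 - E), Q), mem_closure_right P Q E hEE hEQ, ?_, ?_, hQ⟩
    · show P * (1 - E) * Q = B
      rw [mul_assoc, sub_mul, one_mul, hEQ, sub_zero, hPQ]
    · show (P * (1 - E)).det = 0
      rw [Matrix.det_mul, hdet1E, mul_zero]
end

section
/- Let A_1, A_2, A_3, A_4 be 2×2 complex matrices and θ_1, θ_2, θ_3, θ_4 ∈ ℂ, such that for each i the matrix A_i has trace θ_i and determinant 0 (equivalently, characteristic polynomial X(X − θ_i), i.e. eigenvalues 0 and θ_i), and such that A_1 + A_2 + A_3 + A_4 = ν·Id with ν = (θ_1 + θ_2 + θ_3 + θ_4)/2. If there exists a nonzero vector v ∈ ℂ² that is a common eigenvector of A_1, A_2, A_3, A_4 (i.e. for each i, A_i v = c_i v for some c_i ∈ ℂ), then there exist signs s_1, s_2, s_3, s_4 ∈ {+1, −1} such that s_1 θ_1 +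 s_2 θ_2 + s_3 θ_3 + s_4 θ_4 = 0. -/
/-- Eigenvalue of a 2×2 matrix satisfies the characteristic equation. -/
lemma eig_char (M : Matrix (Fin 2) (Fin 2) ℂ) (c : ℂ) (v : Fin 2 → ℂ) (hv : v ≠ 0)
    (h : M.mulVec v = c • v) : c * c - M.trace * c + M.det = 0 := by
  have hker : (M - c • (1 : Matrix (Fin 2) (Fin 2) ℂ)).mulVec v = 0 := by
    rw [Matrix.sub_mulVec, Matrix.smul_mulVec, Matrix.one_mulVec, h, sub_self]
  have hdet : (M - c • (1 : Matrix (Fin 2) (Fin 2) ℂ)).det = 0 := by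
    exact Matrix.exists_mulVec_eq_zero_iff.1 ⟨v, hv, hker⟩
  rw [Matrix.det_fin_two] at hdet
  rw [Matrix.det_fin_two, Matrix.trace_fin_two]
  simp only [Matrix.sub_apply, Matrix.smul_apply, Matrix.one_apply, smul_eq_mul] at hdet
  norm_num at hdet
  ring_nf at hdet ⊢
  linear_combination hdet

/-- If four `2×2` rank-one residues `A i` (trace `θ i`, determinant `0`)
sum to the scalar matrix `ν·Id` with `ν = (∑ θ i)/2`, and they admit a common
eigenvector, then `∑ ± θ i = 0` for some choice of signs. -/
theorem common_eigenvector_implies_theta_relation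
    (A : Fin 4 → Matrix (Fin 2) (Fin 2) ℂ) (θ : Fin 4 → ℂ) (ν : ℂ)
    (htr : ∀ i, (A i).trace = θ i) (hdet : ∀ i, (A i).det = 0)
    (hν : ν = (∑ i, θ i) / 2)
    (hsum : ∑ i, A i = ν • (1 : Matrix (Fin 2) (Fin 2) ℂ))
    (v : Fin 2 → ℂ) (hv : v ≠ 0)
    (heig : ∀ i, ∃ c : ℂ, (A i).mulVec v = c • v) :
    ∃ s : Fin 4 → ℂ, (∀ i, s i = 1 ∨ s i = -1) ∧ ∑ i, s i * θ i = 0 := by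
  choose c hc using heig
  -- each c i satisfies c i * (c i - θ i) = 0
  have hchar : ∀ i, c i = 0 ∨ c i = θ i := by
    intro i
    have := eig_char (A i) (c i) v hv (hc i)
    rw [htr, hdet] at this
    have : c i * (c i - θ i) = 0 := by linear_combination this
    rcases mul_eq_zero.1 this with h | h
    · exact Or.inl h
    · exact Or.inr (sub_eq_zero.1 h)
  -- sum of eigenvalues equals ν
  have hsumc : ∑ i, c i = ν := by
    have h1 : (∑ i, A i).mulVec v = (∑ i, c i) • v := by
      rw [show (∑ i, A i).mulVec v = ∑ i, (A i).mulVec v from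
        map_sum (AddMonoidHom.mk' (fun M : Matrix (Fin 2) (Fin 2) ℂ => M.mulVec v)
          (fun M N => Matrix.add_mulVec M N v)) A Finset.univ]
      simp_rw [hc]
      rw [Finset.sum_smul]
    rw [hsum, Matrix.smul_mulVec, Matrix.one_mulVec] at h1
    obtain ⟨j, hj⟩ := Function.ne_iff.1 hv
    have := congrFun h1 j
    simp only [Pi.smul_apply, smul_eq_mul, Pi.zero_apply] at this hj
    exact (mul_right_cancel₀ hj this).symm
  refine ⟨fun i => if c i = 0 then -1 else 1, fun i => by by_cases h : c i = 0 <;> simp [h], ?_⟩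
  have key : ∀ i, (if c i = 0 then (-1:ℂ) else 1) * θ i = 2 * c i - θ i := by
    intro i
    by_cases h : c i = 0
    · simp [h]
    · have hθ : c i = θ i := (hchar i).resolve_left h
      rw [if_neg h, hθ]; ring
  simp_rw [key]
  rw [Finset.sum_sub_distrib, ← Finset.mul_sum, hsumc, hν]
  ring
end

section
/- Let λ_1, λ_2, λ_3 ∈ ℂ and let A_1 ∈ M_{2×1}(ℂ), B_1 ∈ M_{1×2}(ℂ), A_2 ∈ M_{3×2}(ℂ), B_2 ∈ M_{2×3}(ℂ), A_3 ∈ M_{4×3}(ℂ), B_3 ∈ M_{3×4}(ℂ) be complex matrices satisfying the moment map equations B_1 A_1 = −λ_1 · Id_1, A_1 B_1 − B_2 A_2 = λ_2 · Id_2, and A_2 B_2 − B_3 A_3 = λ_3 · Id_3. Then the 4×4 matrix A_3 B_3 has characteristic polynomial X(X + λ_3)(X + λ_3 + λ_2)(X + λ_3 + λ_2 + λ_1); that is, its eigenvalues are 0, −λ_3, −λ_3 − λ_2, and −λ_3 − λ_2 − λ_1. -/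
open Polynomial

open Matrix

lemma eval_charpoly' {n : ℕ} (M : Matrix (Fin n) (Fin n) ℂ) (x : ℂ) :
    eval x M.charpoly = det (x • (1 : Matrix (Fin n) (Fin n) ℂ) - M) := by
  rw [Matrix.charpoly, ← coe_evalRingHom, RingHom.map_det]
  congr 1
  ext i j
  by_cases h : i = j <;>
    simp [h, charmatrix_apply_eq, charmatrix_apply_ne, Matrix.one_apply,
      Matrix.sub_apply, Matrix.smul_apply, Matrix.map_apply]

lemma det_smul_one_sub_mul_comm {n : ℕ} (A : Matrix (Fin (n+1)) (Fin n) ℂ)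
    (B : Matrix (Fin n) (Fin (n+1)) ℂ) {c : ℂ} (hc : c ≠ 0) :
    det (c • (1 : Matrix (Fin (n+1)) (Fin (n+1)) ℂ) - A * B) =
      c * det (c • (1 : Matrix (Fin n) (Fin n) ℂ) - B * A) := by
  have e1 : c • (1 : Matrix (Fin (n+1)) (Fin (n+1)) ℂ) - A * B
      = c • ((1 : Matrix (Fin (n+1)) (Fin (n+1)) ℂ) - A * (c⁻¹ • B)) := by
    rw [smul_sub, Matrix.mul_smul, smul_smul, mul_inv_cancel₀ hc, one_smul]
  have e2 : c • (1 : Matrix (Fin n) (Fin n) ℂ) - B * A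
      = c • ((1 : Matrix (Fin n) (Fin n) ℂ) - (c⁻¹ • B) * A) := by
    rw [smul_sub, Matrix.smul_mul, smul_smul, mul_inv_cancel₀ hc, one_smul]
  rw [e1, e2, det_smul, det_smul, det_one_sub_mul_comm, Fintype.card_fin, Fintype.card_fin,
    pow_succ]
  ring

/-- For a representation of a leg of a star-shaped quiver with
dimensions `1, 2, 3, 4` satisfying the moment map equations
`B₁A₁ = −λ₁`, `A₁B₁ − B₂A₂ = λ₂`, `A₂B₂ − B₃A₃ = λ₃`, the endomorphism `A₃B₃` at the
top node has eigenvalues `0, −λ₃, −λ₃−λ₂, −λ₃−λ₂−λ₁`. -/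
theorem leg_moment_map_eigenvalues (lam₁ lam₂ lam₃ : ℂ)
    (A₁ : Matrix (Fin 2) (Fin 1) ℂ) (B₁ : Matrix (Fin 1) (Fin 2) ℂ)
    (A₂ : Matrix (Fin 3) (Fin 2) ℂ) (B₂ : Matrix (Fin 2) (Fin 3) ℂ)
    (A₃ : Matrix (Fin 4) (Fin 3) ℂ) (B₃ : Matrix (Fin 3) (Fin 4) ℂ)
    (h₁ : B₁ * A₁ = (-lam₁) • (1 : Matrix (Fin 1) (Fin 1) ℂ))
    (h₂ : A₁ * B₁ - B₂ * A₂ = lam₂ • (1 : Matrix (Fin 2) (Fin 2) ℂ))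
    (h₃ : A₂ * B₂ - B₃ * A₃ = lam₃ • (1 : Matrix (Fin 3) (Fin 3) ℂ)) :
    (A₃ * B₃).charpoly =
      X * (X + C lam₃) * (X + C lam₃ + C lam₂) * (X + C lam₃ + C lam₂ + C lam₁) := by
  apply eq_of_infinite_eval_eq
  apply Set.Infinite.mono (s := ({0, -lam₃, -lam₃ - lam₂} : Set ℂ)ᶜ)
  · intro x hx
    simp only [Set.mem_compl_iff, Set.mem_insert_iff, Set.mem_singleton_iff, not_or] at hx
    obtain ⟨hx0, hx3, hx32⟩ := hx
    have hc3 : x + lam₃ ≠ 0 := fun h => hx3 (by linear_combination h)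
    have hc2 : x + lam₃ + lam₂ ≠ 0 := fun h => hx32 (by linear_combination h)
    have hb3 : B₃ * A₃ = A₂ * B₂ - lam₃ • (1 : Matrix (Fin 3) (Fin 3) ℂ) := by
      linear_combination (norm := module) -h₃
    have hb2 : B₂ * A₂ = A₁ * B₁ - lam₂ • (1 : Matrix (Fin 2) (Fin 2) ℂ) := by
      linear_combination (norm := module) -h₂
    show eval x (A₃ * B₃).charpoly = _
    rw [eval_charpoly', det_smul_one_sub_mul_comm A₃ B₃ hx0, hb3]
    have e3 : x • (1 : Matrix (Fin 3) (Fin 3) ℂ)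
          - (A₂ * B₂ - lam₃ • (1 : Matrix (Fin 3) (Fin 3) ℂ))
        = (x + lam₃) • (1 : Matrix (Fin 3) (Fin 3) ℂ) - A₂ * B₂ := by
      module
    rw [e3, det_smul_one_sub_mul_comm A₂ B₂ hc3, hb2]
    have e2 : (x + lam₃) • (1 : Matrix (Fin 2) (Fin 2) ℂ)
          - (A₁ * B₁ - lam₂ • (1 : Matrix (Fin 2) (Fin 2) ℂ))
        = (x + lam₃ + lam₂) • (1 : Matrix (Fin 2) (Fin 2) ℂ) - A₁ * B₁ := by
      module
    rw [e2, det_smul_one_sub_mul_comm A₁ B₁ hc2, h₁]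
    have e1 : (x + lam₃ + lam₂) • (1 : Matrix (Fin 1) (Fin 1) ℂ)
          - (-lam₁) • (1 : Matrix (Fin 1) (Fin 1) ℂ)
        = (x + lam₃ + lam₂ + lam₁) • (1 : Matrix (Fin 1) (Fin 1) ℂ) := by
      module
    rw [e1, det_smul, det_one]
    simp
    ring
  · apply Set.Finite.infinite_compl
    exact (Set.finite_singleton _).insert _ |>.insert _
end
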